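/- arXiv:2111.02744 — 3 statements merged into one kernel-verified Lean document; each statement's English description precedes it below -/
import Mathlib

section
/- For all real numbers a, b > 0, the improper integral ∫₀^∞ √r / ((r+a)(r+b)) dr equals π / (√a + √b). -/
open MeasureTheory Real Filter Set

lemma sqrt_tendsto_atTop : Tendsto Real.sqrt atTop atTop := by
  simp only [funext Real.sqrt_eq_rpow]
  exact tendsto_rpow_atTop (by norm_num)

lemma arctan_sqrt_deriv (c : ℝ) (hc : 0 < c) {r : ℝ} (hr : 0 < r) :
    HasDerivAt (fun x => Real.arctan (Real.sqrt x / Real.sqrt c))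
      (Real.sqrt c / (2 * Real.sqrt r * (r + c))) r := by
  have h1 : HasDerivAt (fun x => Real.sqrt x / Real.sqrt c)
      (1 / (2 * Real.sqrt r) / Real.sqrt c) r :=
    (Real.hasDerivAt_sqrt hr.ne').div_const _
  have h2 := (Real.hasDerivAt_arctan (Real.sqrt r / Real.sqrt c)).comp r h1
  refine h2.congr_deriv ?_
  have hsr : Real.sqrt r ^ 2 = r := Real.sq_sqrt hr.le
  have hsc : Real.sqrt c ^ 2 = c := Real.sq_sqrt hc.le
  have hsrp : 0 < Real.sqrt r := Real.sqrt_pos.2 hr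
  have hscp : 0 < Real.sqrt c := Real.sqrt_pos.2 hc
  rw [div_pow]
  field_simp
  have hcc : Real.sqrt c * Real.sqrt c = c := Real.mul_self_sqrt hc.le
  linear_combination (-1) * hsr + (-1) * hsc

lemma arctan_sqrt_tendsto (c : ℝ) (hc : 0 < c) :
    Tendsto (fun x => Real.arctan (Real.sqrt x / Real.sqrt c)) atTop (nhds (π / 2)) := by
  have h : Tendsto (fun x => Real.sqrt x / Real.sqrt c) atTop atTop :=
    sqrt_tendsto_atTop.atTop_div_const (Real.sqrt_pos.2 hc)
  exact (tendsto_nhds_of_tendsto_nhdsWithin Real.tendsto_arctan_atTop).comp h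
lemma sqrt_div_linear_tendsto (a : ℝ) (ha : 0 < a) :
    Tendsto (fun r : ℝ => Real.sqrt r / (r + a)) atTop (nhds 0) := by
  have h : Tendsto (fun r : ℝ => (r + a) / Real.sqrt r) atTop atTop := by
    apply tendsto_atTop_mono' _ _ sqrt_tendsto_atTop
    filter_upwards [eventually_gt_atTop (0:ℝ)] with r hr
    have hsr : 0 < Real.sqrt r := Real.sqrt_pos.2 hr
    have hrr : Real.sqrt r * Real.sqrt r = r := Real.mul_self_sqrt hr.le
    rw [le_div_iff₀ hsr]
    nlinarith
  have := h.inv_tendsto_atTop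
  apply this.congr'
  filter_upwards [eventually_gt_atTop (0:ℝ)] with r hr
  simp [Pi.inv_apply, inv_div]

/-- For all `a, b > 0`, `∫₀^∞ √r / ((r+a)(r+b)) dr = π / (√a + √b)`. -/
theorem stmt_0 (a b : ℝ) (ha : 0 < a) (hb : 0 < b) :
    ∫ r in Set.Ioi (0 : ℝ), Real.sqrt r / ((r + a) * (r + b)) =
      Real.pi / (Real.sqrt a + Real.sqrt b) := by
  have hsa : 0 < Real.sqrt a := Real.sqrt_pos.2 ha
  have hsb : 0 < Real.sqrt b := Real.sqrt_pos.2 hb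
  have haa : Real.sqrt a * Real.sqrt a = a := Real.mul_self_sqrt ha.le
  have hbb : Real.sqrt b * Real.sqrt b = b := Real.mul_self_sqrt hb.le
  have hnonneg : ∀ r ∈ Ioi (0:ℝ), 0 ≤ Real.sqrt r / ((r + a) * (r + b)) := by
    intro r hr
    have hr : 0 < r := hr
    exact div_nonneg (Real.sqrt_nonneg _) (mul_nonneg (by linarith) (by linarith))
  have hcont : ∀ c : ℝ, 0 < c →
      Continuous (fun x : ℝ => Real.arctan (Real.sqrt x / Real.sqrt c)) := by
    intro c hc
    exact Real.continuous_arctan.comp (Real.continuous_sqrt.div_const _)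
  rcases eq_or_ne a b with rfl | hab
  · -- case a = b
    set g : ℝ → ℝ := fun r =>
      (1 / Real.sqrt a) * Real.arctan (Real.sqrt r / Real.sqrt a) - Real.sqrt r / (r + a)
      with hg
    have hderiv : ∀ r ∈ Ioi (0:ℝ),
        HasDerivAt g (Real.sqrt r / ((r + a) * (r + a))) r := by
      intro r hr
      have hr : 0 < r := hr
      have hrr : Real.sqrt r * Real.sqrt r = r := Real.mul_self_sqrt hr.le
      have hsr : 0 < Real.sqrt r := Real.sqrt_pos.2 hr
      have h1 := (arctan_sqrt_deriv a ha hr).const_mul (1 / Real.sqrt a)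
      have h2 : HasDerivAt (fun x : ℝ => Real.sqrt x / (x + a))
          ((1 / (2 * Real.sqrt r) * (r + a) - Real.sqrt r * 1) / (r + a) ^ 2) r :=
        (Real.hasDerivAt_sqrt hr.ne').div ((hasDerivAt_id r).add_const a) (by positivity)
      have h := h1.sub h2
      refine h.congr_deriv ?_
      have h3 : Real.sqrt r ^ 3 = r * Real.sqrt r := by
        rw [pow_succ, Real.sq_sqrt hr.le]
      field_simp
      ring_nf
    have htend : Tendsto g atTop (nhds ((1 / Real.sqrt a) * (π / 2) - 0)) :=
      ((arctan_sqrt_tendsto a ha).const_mul _).sub (sqrt_div_linear_tendsto a ha)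
    have h0 : ContinuousWithinAt g (Ici 0) 0 := by
      apply ContinuousWithinAt.sub
      · exact (continuous_const.mul (hcont a ha)).continuousWithinAt
      · exact (Real.continuous_sqrt.continuousWithinAt).div
          ((continuous_id.add continuous_const).continuousWithinAt) (by positivity)
    have key := integral_Ioi_of_hasDerivAt_of_nonneg h0 hderiv hnonneg htend
    have hg0 : g 0 = 0 := by simp [hg]
    rw [key, hg0]
    rw [show Real.sqrt a + Real.sqrt a = 2 * Real.sqrt a by ring, sub_zero, sub_zero]
    rw [eq_div_iff (by positivity)]
    field_simp
    all_goals exact Or.inl (by ring)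
  · -- case a ≠ b
    set g : ℝ → ℝ := fun r =>
      (2 / (a - b)) * (Real.sqrt a * Real.arctan (Real.sqrt r / Real.sqrt a)
        - Real.sqrt b * Real.arctan (Real.sqrt r / Real.sqrt b)) with hg
    have hab' : a - b ≠ 0 := sub_ne_zero.2 hab
    have hderiv : ∀ r ∈ Ioi (0:ℝ),
        HasDerivAt g (Real.sqrt r / ((r + a) * (r + b))) r := by
      intro r hr
      have hr : 0 < r := hr
      have hrr : Real.sqrt r * Real.sqrt r = r := Real.mul_self_sqrt hr.le
      have hsr : 0 < Real.sqrt r := Real.sqrt_pos.2 hr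
      have h := (((arctan_sqrt_deriv a ha hr).const_mul (Real.sqrt a)).sub
        ((arctan_sqrt_deriv b hb hr).const_mul (Real.sqrt b))).const_mul (2 / (a - b))
      refine h.congr_deriv ?_
      have h3 : Real.sqrt r ^ 3 = r * Real.sqrt r := by
        rw [pow_succ, Real.sq_sqrt hr.le]
      field_simp
      ring_nf
      linear_combination (r + b) * Real.sq_sqrt ha.le - (r + a) * Real.sq_sqrt hb.le - (a - b) * Real.sq_sqrt hr.le
    have htend : Tendsto g atTop
        (nhds ((2 / (a - b)) * (Real.sqrt a * (π/2) - Real.sqrt b * (π/2)))) :=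
      (((arctan_sqrt_tendsto a ha).const_mul _).sub
        ((arctan_sqrt_tendsto b hb).const_mul _)).const_mul _
    have h0 : ContinuousWithinAt g (Ici 0) 0 :=
      (continuous_const.mul ((continuous_const.mul (hcont a ha)).sub
        (continuous_const.mul (hcont b hb)))).continuousWithinAt
    have key := integral_Ioi_of_hasDerivAt_of_nonneg h0 hderiv hnonneg htend
    have hg0 : g 0 = 0 := by simp [hg]
    rw [key, hg0, sub_zero]
    have hfac : (Real.sqrt a + Real.sqrt b) * (Real.sqrt a - Real.sqrt b) = a - b := by
      linear_combination haa - hbb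
    have hsum : Real.sqrt a + Real.sqrt b ≠ 0 := by positivity
    rw [eq_div_iff hsum, div_mul_eq_mul_div, div_mul_eq_mul_div, div_eq_iff hab']
    linear_combination π * Real.sq_sqrt ha.le - π * Real.sq_sqrt hb.le
end

section
/- Let X be a Banach space and W : D(W) ⊆ X → X a closed linear operator such that the sector S_φ = {z ∈ ℂ \ {0} : |arg z| ≤ φ} ∪ {0} is contained in ρ(−W) with ‖(W + λ)⁻¹‖ ≤ C/(1 + |λ|) for λ ∈ S_φ. Then for every λ ∈ S_φ and every θ ∈ (0, min{φ, π − φ}), the operator W + λI is of type θ: for all ν ∈ S_θ, W + λI + νI is invertible with ‖(W + λI + ν I)⁻¹‖ ≤ C_θ/(|λ| + |ν| + 1), where C_θ = C / cos((φ + θ)/2). -/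
/-- The closed sector `S_φ = {z ≠ 0 : |arg z| ≤ φ} ∪ {0}`. -/
def Sector (φ : ℝ) : Set ℂ := {z : ℂ | z = 0 ∨ |Complex.arg z| ≤ φ}

/-- `R` is the (bounded, everywhere defined) inverse of `W + μ I`, where `W` is an
unbounded operator with domain `Dom`. -/
def IsResolvent {X : Type*} [NormedAddCommGroup X] [NormedSpace ℂ X]
    (Dom : Submodule ℂ X) (W : Dom →ₗ[ℂ] X) (μ : ℂ) (R : X →L[ℂ] X) : Prop :=
  ∃ hmem : ∀ x : X, R x ∈ Dom,
    (∀ x : X, W ⟨R x, hmem x⟩ + μ • R x = x) ∧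
    (∀ y : Dom, R (W y + μ • (y : X)) = (y : X))

private lemma rot_eq (α β r s : ℝ) (l ν : ℂ)
    (hl : (r : ℂ) * Complex.exp (α * Complex.I) = l)
    (hn : (s : ℂ) * Complex.exp (β * Complex.I) = ν) :
    Complex.exp ((-((α+β)/2) : ℝ) * Complex.I) * (l + ν)
      = (((r+s) * Real.cos ((α-β)/2) : ℝ) : ℂ)
        + (((r-s) * Real.sin ((α-β)/2) : ℝ)) * Complex.I := by
  rw [← hl, ← hn, mul_add]
  have e1 : Complex.exp ((-((α+β)/2) : ℝ) * Complex.I) * ((r:ℂ) * Complex.exp (α * Complex.I))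
      = (r:ℂ) * Complex.exp ((((α-β)/2 : ℝ)) * Complex.I) := by
    rw [mul_left_comm, ← Complex.exp_add]; push_cast; ring_nf
  have e2 : Complex.exp ((-((α+β)/2) : ℝ) * Complex.I) * ((s:ℂ) * Complex.exp (β * Complex.I))
      = (s:ℂ) * Complex.exp (((-((α-β)/2) : ℝ)) * Complex.I) := by
    rw [mul_left_comm, ← Complex.exp_add]; push_cast; ring_nf
  rw [e1, e2]
  apply Complex.ext <;>
    simp only [Complex.add_re, Complex.add_im, Complex.mul_re, Complex.mul_im,
      Complex.ofReal_re, Complex.ofReal_im, Complex.I_re, Complex.I_im,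
      Complex.exp_ofReal_mul_I_re, Complex.exp_ofReal_mul_I_im,
      Real.cos_neg, Real.sin_neg] <;>
    ring

/-- If `W` is a closed operator of type `φ` with bound `C` (i.e. `S_φ ⊆ ρ(−W)` with
`‖(W+λ)⁻¹‖ ≤ C/(1+|λ|)`), then for `λ ∈ S_φ` and `θ ∈ (0, min{φ, π−φ})`, the operator
`W + λI` is of type `θ` with bound `C_θ = C / cos((φ+θ)/2)`:
for all `ν ∈ S_θ`, `‖(W + λI + νI)⁻¹‖ ≤ C_θ/(|λ| + |ν| + 1)`. -/
theorem stmt_6 {X : Type*} [NormedAddCommGroup X] [NormedSpace ℂ X] [CompleteSpace X]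
    (Dom : Submodule ℂ X) (W : Dom →ₗ[ℂ] X)
    (hclosed : IsClosed {q : X × X | ∃ h : q.1 ∈ Dom, W ⟨q.1, h⟩ = q.2})
    (φ C : ℝ) (hφ : φ ∈ Set.Ioo 0 Real.pi) (hC : 0 < C)
    (hres : ∀ l ∈ Sector φ, ∃ R : X →L[ℂ] X,
      IsResolvent Dom W l R ∧ ‖R‖ ≤ C / (1 + ‖l‖)) :
    ∀ l ∈ Sector φ, ∀ θ ∈ Set.Ioo 0 (min φ (Real.pi - φ)), ∀ ν ∈ Sector θ,
      ∃ R : X →L[ℂ] X, IsResolvent Dom W (l + ν) R ∧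
        ‖R‖ ≤ (C / Real.cos ((φ + θ) / 2)) / (‖l‖ + ‖ν‖ + 1) := by
  obtain ⟨hφ0, hφπ⟩ := hφ
  intro l hl θ hθ ν hν
  obtain ⟨hθ0, hθm⟩ := hθ
  have hθφ : θ < φ := lt_of_lt_of_le hθm (min_le_left _ _)
  have hθπ : θ < Real.pi - φ := lt_of_lt_of_le hθm (min_le_right _ _)
  set α := Complex.arg l with hαdef
  set β := Complex.arg ν with hβdef
  set r := ‖l‖ with hrdef
  set s := ‖ν‖ with hsdef
  have hr0 : 0 ≤ r := norm_nonneg l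
  have hs0 : 0 ≤ s := norm_nonneg ν
  have hα : |α| ≤ φ := by
    rcases hl with h | h
    · rw [hαdef, h, Complex.arg_zero, abs_zero]; exact hφ0.le
    · exact h
  have hβ : |β| ≤ θ := by
    rcases hν with h | h
    · rw [hβdef, h, Complex.arg_zero, abs_zero]; exact hθ0.le
    · exact h
  have hα' := abs_le.mp hα
  have hβ' := abs_le.mp hβ
  have hl' : (r : ℂ) * Complex.exp (α * Complex.I) = l := Complex.norm_mul_exp_arg_mul_I l
  have hν' : (s : ℂ) * Complex.exp (β * Complex.I) = ν := Complex.norm_mul_exp_arg_mul_I ν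
  have key := rot_eq α β r s l ν hl' hν'
  set γ := (α + β) / 2 with hγdef
  set δ := (α - β) / 2 with hδdef
  have hδb : |δ| ≤ (φ + θ) / 2 := by
    rw [hδdef, abs_le]; constructor <;> linarith
  have hγδ : |γ| + |δ| ≤ φ := by
    rw [hγdef, hδdef]
    rcases abs_cases ((α + β) / 2) with ⟨h1, _⟩ | ⟨h1, _⟩ <;>
      rcases abs_cases ((α - β) / 2) with ⟨h2, _⟩ | ⟨h2, _⟩ <;>
      rw [h1, h2] <;> linarith
  have hhalf : (φ + θ) / 2 < Real.pi / 2 := by linarith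
  set c := Real.cos ((φ + θ) / 2) with hcdef
  have hc0 : 0 < c := Real.cos_pos_of_mem_Ioo ⟨by linarith, hhalf⟩
  have hc1 : c ≤ 1 := Real.cos_le_one _
  have hcosδ : c ≤ Real.cos δ := by
    rw [← Real.cos_abs δ, hcdef]
    exact Real.cos_le_cos_of_nonneg_of_le_pi (abs_nonneg _) (by linarith [Real.pi_pos]) hδb
  have hcosδ0 : 0 < Real.cos δ := lt_of_lt_of_le hc0 hcosδ
  have habs : ‖Complex.exp ((-γ : ℝ) * Complex.I) * (l + ν)‖ = ‖l + ν‖ := by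
    rw [norm_mul, Complex.norm_exp_ofReal_mul_I, one_mul]
  have hRe : (r + s) * Real.cos δ ≤ ‖l + ν‖ := by
    have h1 : (Complex.exp ((-γ : ℝ) * Complex.I) * (l + ν)).re = (r + s) * Real.cos δ := by
      rw [key]; simp [Complex.cos_ofReal_re]
    calc (r + s) * Real.cos δ = _ := h1.symm
      _ ≤ ‖Complex.exp ((-γ : ℝ) * Complex.I) * (l + ν)‖ := Complex.re_le_norm _
      _ = ‖l + ν‖ := habs
  have hge : (r + s) * c ≤ ‖l + ν‖ :=
    le_trans (mul_le_mul_of_nonneg_left hcosδ (by linarith)) hRe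
  have htri : ‖l + ν‖ ≤ r + s := norm_add_le l ν
  have hmem : l + ν ∈ Sector φ := by
    by_cases hw : l + ν = 0
    · exact Or.inl hw
    right
    have hρ : 0 < ‖l + ν‖ := norm_pos_iff.mpr hw
    have hne2 : Complex.exp ((-γ : ℝ) * Complex.I) * (l + ν) ≠ 0 :=
      mul_ne_zero (Complex.exp_ne_zero _) hw
    set σ := Complex.arg (Complex.exp ((-γ : ℝ) * Complex.I) * (l + ν)) with hσdef
    have hcσ : Real.cos σ = (r + s) * Real.cos δ / ‖l + ν‖ := by
      rw [hσdef, Complex.cos_arg hne2, habs, key]; simp [Complex.cos_ofReal_re]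
    have hcσ' : Real.cos δ ≤ Real.cos σ := by
      rw [hcσ, le_div_iff₀ hρ]
      calc Real.cos δ * ‖l + ν‖ ≤ Real.cos δ * (r + s) :=
            mul_le_mul_of_nonneg_left htri hcosδ0.le
        _ = (r + s) * Real.cos δ := by ring
    have hσb : |σ| ≤ |δ| := by
      by_contra h
      push_neg at h
      have hmono := Real.strictAntiOn_cos
        ⟨abs_nonneg δ, by linarith [Real.pi_pos]⟩
        ⟨abs_nonneg σ, Complex.abs_arg_le_pi _⟩ h
      rw [Real.cos_abs, Real.cos_abs] at hmono
      linarith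
    have hψ : |γ + σ| ≤ φ := le_trans (abs_add_le γ σ) (by linarith)
    have hw2 : l + ν
        = ((‖l + ν‖ : ℝ) : ℂ) * Complex.exp (((γ + σ : ℝ) : ℂ) * Complex.I) := by
      have h3 : Complex.exp ((-γ : ℝ) * Complex.I) * (l + ν)
          = (‖l + ν‖ : ℂ) * Complex.exp ((σ : ℝ) * Complex.I) := by
        conv_lhs => rw [← Complex.norm_mul_exp_arg_mul_I
          (Complex.exp ((-γ : ℝ) * Complex.I) * (l + ν))]
        rw [habs, hσdef]
      calc l + ν
          = Complex.exp ((γ : ℝ) * Complex.I)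
            * (Complex.exp ((-γ : ℝ) * Complex.I) * (l + ν)) := by
            rw [← mul_assoc, ← Complex.exp_add]
            norm_num
        _ = Complex.exp ((γ : ℝ) * Complex.I)
            * ((‖l + ν‖ : ℂ) * Complex.exp ((σ : ℝ) * Complex.I)) := by rw [h3]
        _ = ((‖l + ν‖ : ℝ) : ℂ)
            * Complex.exp (((γ + σ : ℝ) : ℂ) * Complex.I) := by
            rw [mul_left_comm, ← Complex.exp_add]; push_cast; ring_nf
    rw [hw2, Complex.arg_real_mul _ hρ, Complex.exp_mul_I,
      Complex.arg_cos_add_sin_mul_I ⟨by cases abs_le.mp hψ; linarith, by cases abs_le.mp hψ; linarith⟩]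
    exact hψ
  obtain ⟨R, hRres, hRb⟩ := hres (l + ν) hmem
  refine ⟨R, hRres, hRb.trans ?_⟩
  rw [div_div, div_le_div_iff₀ (by positivity) (by positivity)]
  have h5 : c * (r + s + 1) ≤ 1 + ‖l + ν‖ := by
    calc c * (r + s + 1) = (r + s) * c + c := by ring
      _ ≤ ‖l + ν‖ + 1 := add_le_add hge hc1
      _ = 1 + ‖l + ν‖ := by ring
  exact mul_le_mul_of_nonneg_left h5 hC.le
end

section
/- Let φ₂, φ₃ ∈ (0, π) with φ₂ + φ₃ < π. For all λ ∈ S_{φ₂} and μ ∈ S_{φ₃}, one has |λ + μ| ≥ cos((φ₂+φ₃)/2) · (|λ| + |μ|). Consequently, if |λ| ≥ r₀/cos²((φ₂+φ₃)/2) then |λ| ≥ r₀ and |λ + μ|²/|λ| ≥ r₀. -/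
open Complex

/-- For `λ ∈ S_{φ₂}`, `μ ∈ S_{φ₃}` with `φ₂ + φ₃ < π`:
`|λ + μ| ≥ cos((φ₂+φ₃)/2)(|λ| + |μ|)`; consequently if
`|λ| ≥ r₀/cos²((φ₂+φ₃)/2)` then `|λ| ≥ r₀` and `|λ+μ|²/|λ| ≥ r₀`. -/
theorem stmt_10 (φ₂ φ₃ : ℝ) (hφ₂ : φ₂ ∈ Set.Ioo 0 Real.pi) (hφ₃ : φ₃ ∈ Set.Ioo 0 Real.pi)
    (hsum : φ₂ + φ₃ < Real.pi) (r₀ : ℝ) (hr₀ : 0 < r₀)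
    (l m : ℂ) (hl : l ∈ Sector φ₂) (hm : m ∈ Sector φ₃) :
    Real.cos ((φ₂ + φ₃) / 2) * (‖l‖ + ‖m‖) ≤ ‖l + m‖ ∧
    (r₀ / Real.cos ((φ₂ + φ₃) / 2) ^ 2 ≤ ‖l‖ →
      r₀ ≤ ‖l‖ ∧ r₀ ≤ ‖l + m‖ ^ 2 / ‖l‖) := by
  set c := Real.cos ((φ₂ + φ₃) / 2) with hc_def
  have hc : 0 < c := by
    apply Real.cos_pos_of_mem_Ioo
    constructor
    · have : 0 < φ₂ + φ₃ := by linarith [hφ₂.1, hφ₃.1]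
      linarith [Real.pi_pos]
    · linarith
  have hc1 : c ≤ 1 := Real.cos_le_one _
  have hmain : c * (‖l‖ + ‖m‖) ≤ ‖l + m‖ := by
    rcases hl with rfl | hl
    · simpa using by nlinarith [norm_nonneg m]
    rcases hm with rfl | hm
    · simpa using by nlinarith [norm_nonneg l]
    by_cases hl0 : l = 0
    · subst hl0
      simpa using by nlinarith [norm_nonneg m]
    by_cases hm0 : m = 0
    · subst hm0
      simpa using by nlinarith [norm_nonneg l]
    set a := ‖l‖
    set b := ‖m‖
    have ha : 0 < a := norm_pos_iff.mpr hl0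
    have hb : 0 < b := norm_pos_iff.mpr hm0
    have h1 : l.re * m.re + l.im * m.im = a * b * Real.cos (Complex.arg l - Complex.arg m) := by
      rw [Real.cos_sub, Complex.cos_arg hl0, Complex.sin_arg, Complex.cos_arg hm0,
        Complex.sin_arg]
      field_simp
      rfl
    have habs : |Complex.arg l - Complex.arg m| ≤ φ₂ + φ₃ := by
      calc |Complex.arg l - Complex.arg m| ≤ |Complex.arg l| + |Complex.arg m| := abs_sub _ _
        _ ≤ φ₂ + φ₃ := by linarith
    have h2 : Real.cos (φ₂ + φ₃) ≤ Real.cos (Complex.arg l - Complex.arg m) := by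
      rw [← Real.cos_abs (Complex.arg l - Complex.arg m)]
      exact Real.cos_le_cos_of_nonneg_of_le_pi (abs_nonneg _) (le_of_lt hsum) habs
    have h3 : Real.cos (φ₂ + φ₃) = 2 * c ^ 2 - 1 := by
      have := Real.cos_two_mul ((φ₂ + φ₃) / 2)
      rw [← hc_def] at this
      rw [show φ₂ + φ₃ = 2 * ((φ₂ + φ₃) / 2) by ring, this]
    have hsq : (c * (a + b)) ^ 2 ≤ ‖l + m‖ ^ 2 := by
      have hnorm : ‖l + m‖ ^ 2 =
          a ^ 2 + b ^ 2 + 2 * (l.re * m.re + l.im * m.im) := by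
        rw [Complex.sq_norm, Complex.normSq_add, ← Complex.sq_norm l, ← Complex.sq_norm m]
        simp [Complex.mul_re, Complex.conj_re, Complex.conj_im]
        rfl
      rw [hnorm, h1]
      nlinarith [mul_pos ha hb, h2, h3, mul_le_mul_of_nonneg_left h2
        (le_of_lt (mul_pos ha hb)),
        mul_nonneg (show (0:ℝ) ≤ 1 - c ^ 2 by nlinarith) (sq_nonneg (a - b))]
    nlinarith [norm_nonneg (l + m), mul_nonneg (le_of_lt hc)
      (add_nonneg (norm_nonneg l) (norm_nonneg m)), hsq]
  refine ⟨hmain, fun hr => ?_⟩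
  have hc2 : 0 < c ^ 2 := by positivity
  have h1 : r₀ ≤ r₀ / c ^ 2 := by
    rw [le_div_iff₀ hc2]
    nlinarith [mul_nonneg hr₀.le (show (0:ℝ) ≤ 1 - c ^ 2 by nlinarith)]
  have hla : r₀ ≤ ‖l‖ := le_trans h1 hr
  refine ⟨hla, ?_⟩
  have hlpos : 0 < ‖l‖ := lt_of_lt_of_le hr₀ hla
  rw [le_div_iff₀ hlpos]
  have h2 : c * ‖l‖ ≤ ‖l + m‖ := by
    calc c * ‖l‖ ≤ c * (‖l‖ + ‖m‖) := by
          nlinarith [norm_nonneg m]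
      _ ≤ ‖l + m‖ := hmain
  have h3 : r₀ ≤ c ^ 2 * ‖l‖ := by
    rw [div_le_iff₀ hc2] at hr
    linarith
  nlinarith [h2, h3, mul_nonneg (le_of_lt hc) (norm_nonneg l)]
end
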